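/- Let B be a family of blocks in a monoid M with parameter type Θ, and assume additionally that every block index admits an identity parameter, i.e. for each i there exists e ∈ Θ with B i e = 1. Let n ≥ 1 and r ≥ 1. For any single parameter assignment θ for a zigzag of height n, there exists a parameter assignment ψ such that the r-th power (L_{1,n}(θ))^r = T_n(ψ); that is, r identical zigzags of height n compress into a single triangle of height n. -/

import Mathlib

/-- The cascade `C_{i,j}(θ) = B i (θ i) * B (i+1) (θ (i+1)) * ⋯ * B j (θ j)`. -/
def cascade {M Θ : Type*} [Monoid M] (B : ℕ → Θ → M) (i j : ℕ) (θ : ℕ → Θ) : M :=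
  ((List.range (j + 1 - i)).map (fun k => B (i + k) (θ (i + k)))).prod

/-- The triangle `T_n(θ) = C_{n,n} * C_{n-1,n} * ⋯ * C_{1,n}`, where the `k`-th cascade
`C_{n-k,n}` carries its own parameters `θ k`. -/
def triangle {M Θ : Type*} [Monoid M] (B : ℕ → Θ → M) (n : ℕ) (θ : ℕ → ℕ → Θ) : M :=
  ((List.range n).map (fun k => cascade B (n - k) n (θ k))).prod

/-- The zigzag `L_{1,n}(θ)`: the product of the odd-indexed blocks `B k (θ k)` for
`1 ≤ k ≤ n` (in increasing order of `k`), followed by the product of the even-indexed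
blocks `B k (θ k)` for `1 ≤ k ≤ n` (in increasing order of `k`). -/
def zigzag {M Θ : Type*} [Monoid M] (B : ℕ → Θ → M) (n : ℕ) (θ : ℕ → Θ) : M :=
  (((((List.range n).map (· + 1)).filter (fun k => k % 2 = 1)).map
      (fun k => B k (θ k))).prod) *
  (((((List.range n).map (· + 1)).filter (fun k => k % 2 = 0)).map
      (fun k => B k (θ k))).prod)

section ZigzagAux

variable {M Θ : Type*} [Monoid M] (B : ℕ → Θ → M)

lemma cascade_nil {i j : ℕ} (h : j < i) (θ : ℕ → Θ) : cascade B i j θ = 1 := by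
  unfold cascade
  rw [Nat.sub_eq_zero_of_le h]
  simp

lemma cascade_cons {i j : ℕ} (h : i ≤ j) (θ : ℕ → Θ) :
    cascade B i j θ = B i (θ i) * cascade B (i+1) j θ := by
  unfold cascade
  have h1 : j + 1 - i = (j + 1 - (i+1)) + 1 := by omega
  rw [h1, List.range_succ_eq_map]
  simp only [List.map_cons, List.map_map, List.prod_cons, Nat.add_zero]
  refine congrArg _ (congrArg _ (List.map_congr_left fun k _ => ?_))
  simp only [Function.comp, Nat.succ_eq_add_one]
  rw [show i + (k+1) = i+1+k by omega]

lemma cascade_congr {i j : ℕ} {θ θ' : ℕ → Θ} (h : ∀ k, i ≤ k → k ≤ j → θ k = θ' k) :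
    cascade B i j θ = cascade B i j θ' := by
  unfold cascade
  congr 1
  apply List.map_congr_left
  intro k hk
  rw [List.mem_range] at hk
  rw [h (i + k) (by omega) (by omega)]

section Hyps
variable (hfusion : ∀ (i : ℕ) (α β : Θ), ∃ a : Θ, B i α * B i β = B i a)
variable (hcomm : ∀ (i j : ℕ), 1 < Nat.dist i j → ∀ (α β : Θ),
      B i α * B j β = B j β * B i α)
variable (hturnover : ∀ (i : ℕ) (α β γ : Θ), ∃ a b c : Θ,
      B i α * B (i + 1) β * B i γ = B (i + 1) a * B i b * B (i + 1) c)

include hcomm in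
lemma comm_cascade : ∀ (d i l j : ℕ) (α : Θ) (θ : ℕ → Θ), i + 1 < l → j + 1 - l = d →
    B i α * cascade B l j θ = cascade B l j θ * B i α := by
  intro d
  induction d with
  | zero =>
    intro i l j α θ hil hd
    rw [cascade_nil B (by omega) θ]
    simp
  | succ d ih =>
    intro i l j α θ hil hd
    have hlj : l ≤ j := by omega
    rw [cascade_cons B hlj θ, ← mul_assoc, hcomm i l (by simp [Nat.dist]; omega) α (θ l),
      mul_assoc, ih i (l+1) j α θ (by omega) (by omega), ← mul_assoc]

include hfusion hcomm hturnover in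
lemma merge_cascade : ∀ (d i j : ℕ) (θ φ : ℕ → Θ), i + d = j →
    ∃ θ' φ' : ℕ → Θ, cascade B i j θ * cascade B i j φ =
      cascade B (i+1) j θ' * cascade B i j φ' := by
  intro d
  induction d with
  | zero =>
    intro i j θ φ hd
    subst hd
    simp only [Nat.add_zero]
    obtain ⟨a, ha⟩ := hfusion i (θ i) (φ i)
    refine ⟨φ, fun _ => a, ?_⟩
    rw [cascade_cons B le_rfl θ, cascade_cons B le_rfl φ, cascade_cons B le_rfl (fun _ => a),
      cascade_nil B (by omega), cascade_nil B (by omega), cascade_nil B (by omega)]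
    simp [ha]
  | succ d ih =>
    intro i j θ φ hd
    have hij : i + 1 ≤ j := by omega
    -- LHS = B i θi * (B (i+1) θ(i+1) * C_{i+2,j}(θ)) * B i φi * C_{i+1,j}(φ)
    rw [cascade_cons B (by omega : i ≤ j) θ, cascade_cons B (by omega : i ≤ j) φ,
      cascade_cons B hij θ]
    -- move B i (φ i) left past C_{i+2,j}(θ)
    have hmove : cascade B (i+1+1) j θ * (B i (φ i) * cascade B (i+1) j φ)
        = B i (φ i) * (cascade B (i+1+1) j θ * cascade B (i+1) j φ) := by
      rw [← mul_assoc, ← comm_cascade B hcomm (j + 1 - (i+2)) i (i+2) j (φ i) θ (by omega) rfl,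
        mul_assoc]
    obtain ⟨a, b, c, habc⟩ := hturnover i (θ i) (θ (i+1)) (φ i)
    -- C_{i+1,j}(θ₁) with θ₁ = update θ (i+1) c
    have hc1 : cascade B (i+1) j (Function.update θ (i+1) c)
        = B (i+1) c * cascade B (i+1+1) j θ := by
      rw [cascade_cons B hij]
      simp only [Function.update_self]
      congr 1
      exact cascade_congr B (fun k hk1 hk2 => Function.update_of_ne (by omega) _ _)
    obtain ⟨θ₂, φ₂, h2⟩ := ih (i+1) j (Function.update θ (i+1) c) φ (by omega)
    refine ⟨Function.update θ₂ (i+1) a, Function.update φ₂ i b, ?_⟩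
    calc B i (θ i) * (B (i+1) (θ (i+1)) * cascade B (i+1+1) j θ) *
          (B i (φ i) * cascade B (i+1) j φ)
        = (B i (θ i) * B (i+1) (θ (i+1)) * B i (φ i)) *
            (cascade B (i+1+1) j θ * cascade B (i+1) j φ) := by
          rw [mul_assoc (B i (θ i)), mul_assoc (B (i+1) (θ (i+1))), hmove]
          simp only [mul_assoc]
      _ = B (i+1) a * B i b * (B (i+1) c * cascade B (i+1+1) j θ) * cascade B (i+1) j φ := by
          rw [habc]; simp only [mul_assoc]
      _ = B (i+1) a * B i b *
            (cascade B (i+1) j (Function.update θ (i+1) c) * cascade B (i+1) j φ) := by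
          rw [hc1]; simp only [mul_assoc]
      _ = B (i+1) a * B i b * (cascade B (i+1+1) j θ₂ * cascade B (i+1) j φ₂) := by rw [h2]
      _ = B (i+1) a * (cascade B (i+1+1) j θ₂ * (B i b * cascade B (i+1) j φ₂)) := by
          simp only [mul_assoc]
          rw [← mul_assoc (B i b),
            comm_cascade B hcomm (j + 1 - (i+1+1)) i (i+1+1) j b θ₂ (by omega) rfl, mul_assoc]
      _ = cascade B (i+1) j (Function.update θ₂ (i+1) a) *
            cascade B i j (Function.update φ₂ i b) := by
          have e1 : cascade B (i+1+1) j (Function.update θ₂ (i+1) a)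
              = cascade B (i+1+1) j θ₂ :=
            cascade_congr B (fun k hk1 _ => Function.update_of_ne (by omega) _ _)
          have e2 : cascade B (i+1) j (Function.update φ₂ i b)
              = cascade B (i+1) j φ₂ :=
            cascade_congr B (fun k hk1 _ => Function.update_of_ne (by omega) _ _)
          rw [cascade_cons B hij (Function.update θ₂ (i+1) a),
            cascade_cons B (by omega : i ≤ j) (Function.update φ₂ i b),
            Function.update_self, Function.update_self, e1, e2, mul_assoc]
end Hyps

def ptri (m n : ℕ) (ψ : ℕ → ℕ → Θ) : M :=
  ((List.range m).map (fun k => cascade B (n - k) n (ψ k))).prod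

lemma ptri_zero (n : ℕ) (ψ : ℕ → ℕ → Θ) : ptri B 0 n ψ = 1 := by simp [ptri]

lemma ptri_succ (m n : ℕ) (ψ : ℕ → ℕ → Θ) :
    ptri B (m+1) n ψ = ptri B m n ψ * cascade B (n - m) n (ψ m) := by
  unfold ptri
  rw [List.range_succ, List.map_append, List.prod_append]
  simp

lemma ptri_congr {m n : ℕ} {ψ ψ' : ℕ → ℕ → Θ} (h : ∀ k, k < m → ψ k = ψ' k) :
    ptri B m n ψ = ptri B m n ψ' := by
  unfold ptri
  congr 1
  apply List.map_congr_left
  intro k hk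
  rw [List.mem_range] at hk
  rw [h k hk]

section Hyps2
variable (hfusion : ∀ (i : ℕ) (α β : Θ), ∃ a : Θ, B i α * B i β = B i a)
variable (hcomm : ∀ (i j : ℕ), 1 < Nat.dist i j → ∀ (α β : Θ),
      B i α * B j β = B j β * B i α)
variable (hturnover : ∀ (i : ℕ) (α β γ : Θ), ∃ a b c : Θ,
      B i α * B (i + 1) β * B i γ = B (i + 1) a * B i b * B (i + 1) c)

include hcomm in
lemma comm_ptri (m n i : ℕ) (α : Θ) (ψ : ℕ → ℕ → Θ) (h : ∀ k, k < m → i + 1 < n - k) :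
    B i α * ptri B m n ψ = ptri B m n ψ * B i α := by
  induction m with
  | zero => simp [ptri_zero]
  | succ m ih =>
    rw [ptri_succ, ← mul_assoc, ih (fun k hk => h k (by omega)), mul_assoc,
      comm_cascade B hcomm (n + 1 - (n - m)) i (n - m) n α (ψ m) (h m (by omega)) rfl,
      ← mul_assoc]

include hfusion hcomm hturnover in
lemma absorb_block : ∀ (m n i : ℕ) (α : Θ) (ψ : ℕ → ℕ → Θ), 1 ≤ m → m ≤ n → i ≤ n →
    n < i + m → ∃ ψ' : ℕ → ℕ → Θ, B i α * ptri B m n ψ = ptri B m n ψ' := by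
  intro m
  induction m with
  | zero => omega
  | succ m ih =>
    intro n i α ψ _ hmn hin hni
    rcases Nat.eq_zero_or_pos m with hm0 | hm1
    · -- m+1 = 1 : single cascade C_{n,n}, i = n
      subst hm0
      have hi : i = n := by omega
      subst hi
      obtain ⟨a, ha⟩ := hfusion i α (ψ 0 i)
      refine ⟨fun _ _ => a, ?_⟩
      rw [ptri_succ, ptri_zero, ptri_succ, ptri_zero, one_mul, one_mul, Nat.sub_zero,
        cascade_cons B le_rfl, cascade_cons B le_rfl, cascade_nil B (by omega),
        cascade_nil B (by omega), mul_one, mul_one]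
      exact ha
    · rcases Nat.lt_or_ge (n - m) i with hlt | hge
      · -- i is handled by the inner partial triangle
        obtain ⟨ψ'', h2⟩ := ih n i α ψ hm1 (by omega) hin (by omega)
        refine ⟨Function.update ψ'' m (ψ m), ?_⟩
        rw [ptri_succ, ← mul_assoc, h2, ptri_succ, Function.update_self]
        have e1 : ptri B m n (Function.update ψ'' m (ψ m)) = ptri B m n ψ'' :=
          ptri_congr B (fun k hk => Function.update_of_ne (by omega) _ _)
        rw [e1]
      · -- i = n - m : the bottom block of the triangle
        obtain ⟨m', rfl⟩ : ∃ m', m = m' + 1 := ⟨m - 1, by omega⟩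
        have hi : n - (m' + 1) = i := by omega
        have hi' : n - m' = i + 1 := by omega
        have hin' : i + 1 ≤ n := by omega
        have hcp : B i α * ptri B m' n ψ = ptri B m' n ψ * B i α :=
          comm_ptri B hcomm m' n i α ψ (fun k hk => by omega)
        have habs : B i α * cascade B (i+1) n (ψ m')
            = cascade B i n (Function.update (ψ m') i α) := by
          rw [cascade_cons B (by omega : i ≤ n), Function.update_self]
          congr 1
          exact (cascade_congr B (fun k hk1 _ =>
            (Function.update_of_ne (by omega) _ _).symm))
        obtain ⟨θ', φ', hm⟩ := merge_cascade B hfusion hcomm hturnover (n - i) i n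
          (Function.update (ψ m') i α) (ψ (m'+1)) (by omega)
        refine ⟨Function.update (Function.update ψ (m'+1) φ') m' θ', ?_⟩
        have e1 : ptri B m' n (Function.update (Function.update ψ (m'+1) φ') m' θ')
            = ptri B m' n ψ :=
          ptri_congr B (fun k hk => by
            rw [Function.update_of_ne (by omega), Function.update_of_ne (by omega)])
        have e2 : Function.update (Function.update ψ (m'+1) φ') m' θ' (m'+1) = φ' := by
          rw [Function.update_of_ne (by omega), Function.update_self]
        rw [ptri_succ, ptri_succ, hi, hi', ptri_succ (ψ := Function.update _ _ _),
          ptri_succ (ψ := Function.update _ _ _), hi, hi', e1, Function.update_self, e2]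
        calc B i α * (ptri B m' n ψ * cascade B (i+1) n (ψ m') * cascade B i n (ψ (m'+1)))
            = (B i α * ptri B m' n ψ) * cascade B (i+1) n (ψ m')
                * cascade B i n (ψ (m'+1)) := by simp only [mul_assoc]
          _ = ptri B m' n ψ * (B i α * cascade B (i+1) n (ψ m'))
                * cascade B i n (ψ (m'+1)) := by rw [hcp]; simp only [mul_assoc]
          _ = ptri B m' n ψ * (cascade B i n (Function.update (ψ m') i α)
                * cascade B i n (ψ (m'+1))) := by rw [habs]; simp only [mul_assoc]
          _ = ptri B m' n ψ * cascade B (i+1) n θ' * cascade B i n φ' := by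
                rw [hm]; simp only [mul_assoc]
end Hyps2

section Hyps3
variable (hfusion : ∀ (i : ℕ) (α β : Θ), ∃ a : Θ, B i α * B i β = B i a)
variable (hcomm : ∀ (i j : ℕ), 1 < Nat.dist i j → ∀ (α β : Θ),
      B i α * B j β = B j β * B i α)
variable (hturnover : ∀ (i : ℕ) (α β γ : Θ), ∃ a b c : Θ,
      B i α * B (i + 1) β * B i γ = B (i + 1) a * B i b * B (i + 1) c)

include hfusion hcomm hturnover in
lemma absorb_list (n : ℕ) (θ : ℕ → Θ) :
    ∀ (l : List ℕ), (∀ k ∈ l, 1 ≤ k ∧ k ≤ n) → ∀ ψ : ℕ → ℕ → Θ,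
    ∃ ψ' : ℕ → ℕ → Θ, (l.map (fun k => B k (θ k))).prod * ptri B n n ψ = ptri B n n ψ' := by
  intro l
  induction l with
  | nil => intro _ ψ; exact ⟨ψ, by simp⟩
  | cons k l ihl =>
    intro hmem ψ
    obtain ⟨ψ₁, h1⟩ := ihl (fun k hk => hmem k (List.mem_cons_of_mem _ hk)) ψ
    obtain ⟨hk1, hk2⟩ := hmem k (List.mem_cons_self)
    obtain ⟨ψ₂, h2⟩ := absorb_block B hfusion hcomm hturnover n n k (θ k) ψ₁
      (by omega) le_rfl hk2 (by omega)
    exact ⟨ψ₂, by rw [List.map_cons, List.prod_cons, mul_assoc, h1, h2]⟩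
end Hyps3

lemma zigzag_list_mem (n : ℕ) (p : ℕ → Bool) :
    ∀ k ∈ (((List.range n).map (· + 1)).filter p), 1 ≤ k ∧ k ≤ n := by
  intro k hk
  have hk' := List.mem_of_mem_filter hk
  simp only [List.mem_map, List.mem_range] at hk'
  omega

end ZigzagAux

/-- **Corollary (compression for time-independent Hamiltonians).**  Let `B` be a family of
blocks in a monoid `M` (satisfying fusion, commutation and turnover) such that every block
index admits an identity parameter.  For `n ≥ 1` and `r ≥ 1`, the `r`-th power of a single
zigzag of height `n` compresses into a single triangle of height `n`. -/
theorem zigzag_power_compression {M Θ : Type*} [Monoid M] (B : ℕ → Θ → M)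
    (hfusion : ∀ (i : ℕ) (α β : Θ), ∃ a : Θ, B i α * B i β = B i a)
    (hcomm : ∀ (i j : ℕ), 1 < Nat.dist i j → ∀ (α β : Θ),
      B i α * B j β = B j β * B i α)
    (hturnover : ∀ (i : ℕ) (α β γ : Θ), ∃ a b c : Θ,
      B i α * B (i + 1) β * B i γ = B (i + 1) a * B i b * B (i + 1) c)
    (hid : ∀ i : ℕ, ∃ e : Θ, B i e = 1)
    (n r : ℕ) (hn : 1 ≤ n) (hr : 1 ≤ r) :
    ∀ θ : ℕ → Θ, ∃ ψ : ℕ → ℕ → Θ,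
      (zigzag B n θ) ^ r = triangle B n ψ := by
  intro θ
  choose e he using hid
  have hcas1 : ∀ i j : ℕ, cascade B i j e = 1 := by
    intro i j
    unfold cascade
    apply List.prod_eq_one
    intro x hx
    simp only [List.mem_map, List.mem_range] at hx
    obtain ⟨k, _, rfl⟩ := hx
    exact he _
  have htri1 : triangle B n (fun _ => e) = 1 := by
    unfold triangle
    apply List.prod_eq_one
    intro x hx
    simp only [List.mem_map, List.mem_range] at hx
    obtain ⟨k, _, rfl⟩ := hx
    exact hcas1 _ _
  have htri : ∀ ψ : ℕ → ℕ → Θ, triangle B n ψ = ptri B n n ψ := fun _ => rfl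
  have hzig : ∀ ψ : ℕ → ℕ → Θ, ∃ ψ' : ℕ → ℕ → Θ,
      zigzag B n θ * ptri B n n ψ = ptri B n n ψ' := by
    intro ψ
    obtain ⟨ψ', h⟩ := absorb_list B hfusion hcomm hturnover n θ
      ((((List.range n).map (· + 1)).filter (fun k => k % 2 = 1)) ++
       (((List.range n).map (· + 1)).filter (fun k => k % 2 = 0)))
      (by
        intro k hk
        rcases List.mem_append.1 hk with h | h
        exacts [zigzag_list_mem n _ k h, zigzag_list_mem n _ k h]) ψ
    refine ⟨ψ', ?_⟩
    rw [← h, List.map_append, List.prod_append]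
    rfl
  have main : ∀ (s : ℕ) (ψ : ℕ → ℕ → Θ), ∃ ψ' : ℕ → ℕ → Θ,
      (zigzag B n θ) ^ s * ptri B n n ψ = ptri B n n ψ' := by
    intro s
    induction s with
    | zero => intro ψ; exact ⟨ψ, by simp⟩
    | succ s ih =>
      intro ψ
      obtain ⟨ψ₁, h1⟩ := hzig ψ
      obtain ⟨ψ₂, h2⟩ := ih ψ₁
      exact ⟨ψ₂, by rw [pow_succ, mul_assoc, h1, h2]⟩
  obtain ⟨ψ, h⟩ := main r (fun _ => e)
  refine ⟨ψ, ?_⟩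
  rw [htri, ← h, ← htri (fun _ => e), htri1, mul_one]
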